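/- Variance of Kendall's τ under the null: if σ is a uniformly random permutation of {1,…,n} (n ≥ 2) and S = Σ_{i<j} sgn(σ(j) − σ(i)), then Var(S) = n(n−1)(2n+5)/18, equivalently Var(τ) = 2(2n+5)/(9n(n−1)) for τ = S/(n(n−1)/2). -/

import Mathlib

open Finset


lemma sign_if {u v : ℤ} (huv : u ≠ v) : Int.sign (v - u) = if u < v then 1 else -1 := by
  rcases lt_or_gt_of_ne huv with h | h
  · rw [if_pos h]; exact Int.sign_eq_one_iff_pos.mpr (by omega)
  · rw [if_neg (not_lt.mpr h.le)]; exact Int.sign_eq_neg_one_iff_neg.mpr (by omega)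

lemma sign_tri {x y z : ℤ} (hxy : x ≠ y) (hxz : x ≠ z) (hyz : y ≠ z) :
    Int.sign (y - x) * Int.sign (z - x) + Int.sign (x - y) * Int.sign (z - y)
      + Int.sign (y - z) * Int.sign (x - z) = 1 := by
  rw [sign_if hxy, sign_if hxz, sign_if hxy.symm, sign_if hyz, sign_if hyz.symm, sign_if hxz.symm]
  split_ifs <;> omega

lemma val_ne {n : ℕ} {σ : Equiv.Perm (Fin n)} {a b : Fin n} (h : a ≠ b) :
    ((σ a : ℤ)) ≠ ((σ b : ℤ)) := by
  intro hc
  exact h (σ.injective (Fin.val_injective (by exact_mod_cast hc)))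

lemma sum_comp_swap {n : ℕ} (f : Equiv.Perm (Fin n) → ℚ) (π : Equiv.Perm (Fin n)) :
    ∑ σ : Equiv.Perm (Fin n), f (σ * π) = ∑ σ, f σ :=
  Equiv.sum_comp (Equiv.mulRight π) f

lemma third {n : ℕ} {a b c : Fin n} (hab : a ≠ b) (hac : a ≠ c) (hbc : b ≠ c) :
    (3:ℚ) * ∑ σ : Equiv.Perm (Fin n),
        ((Int.sign ((σ b : ℤ) - (σ a : ℤ)) : ℚ) * (Int.sign ((σ c : ℤ) - (σ a : ℤ)) : ℚ))
      = (n.factorial : ℚ) := by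
  set f : Equiv.Perm (Fin n) → ℚ := fun σ =>
    ((Int.sign ((σ b : ℤ) - (σ a : ℤ)) : ℚ) * (Int.sign ((σ c : ℤ) - (σ a : ℤ)) : ℚ)) with hf
  have h1 : ∑ σ : Equiv.Perm (Fin n),
      ((Int.sign ((σ a : ℤ) - (σ b : ℤ)) : ℚ) * (Int.sign ((σ c : ℤ) - (σ b : ℤ)) : ℚ))
      = ∑ σ, f σ := by
    rw [← sum_comp_swap f (Equiv.swap a b)]
    refine Finset.sum_congr rfl fun σ _ => ?_
    simp [hf, Equiv.Perm.mul_apply, Equiv.swap_apply_left, Equiv.swap_apply_right,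
      Equiv.swap_apply_of_ne_of_ne hac.symm hbc.symm]
  have h2 : ∑ σ : Equiv.Perm (Fin n),
      ((Int.sign ((σ b : ℤ) - (σ c : ℤ)) : ℚ) * (Int.sign ((σ a : ℤ) - (σ c : ℤ)) : ℚ))
      = ∑ σ, f σ := by
    rw [← sum_comp_swap f (Equiv.swap a c)]
    refine Finset.sum_congr rfl fun σ _ => ?_
    simp [hf, Equiv.Perm.mul_apply, Equiv.swap_apply_left, Equiv.swap_apply_right,
      Equiv.swap_apply_of_ne_of_ne hab.symm hbc]
  have hcard : ∑ _σ : Equiv.Perm (Fin n), (1:ℚ) = (n.factorial : ℚ) := by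
    simp [Fintype.card_perm]
  have h3 : (∑ σ, f σ)
      + ((∑ σ : Equiv.Perm (Fin n),
          ((Int.sign ((σ a : ℤ) - (σ b : ℤ)) : ℚ) * (Int.sign ((σ c : ℤ) - (σ b : ℤ)) : ℚ)))
        + (∑ σ : Equiv.Perm (Fin n),
          ((Int.sign ((σ b : ℤ) - (σ c : ℤ)) : ℚ) * (Int.sign ((σ a : ℤ) - (σ c : ℤ)) : ℚ))))
      = ∑ _σ : Equiv.Perm (Fin n), (1:ℚ) := by
    rw [← Finset.sum_add_distrib, ← Finset.sum_add_distrib]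
    refine Finset.sum_congr rfl fun σ _ => ?_
    have h := sign_tri (val_ne (σ:=σ) hab) (val_ne (σ:=σ) hac) (val_ne (σ:=σ) hbc)
    have h' := congrArg (fun t : ℤ => (t : ℚ)) h
    push_cast at h'
    simp only [hf]
    linarith
  linarith [h1, h2, h3, hcard]

lemma pair_sum {n : ℕ} {a b c d : Fin n} (hab : a < b) (hcd : c < d) :
    (3:ℚ) * ∑ σ : Equiv.Perm (Fin n),
        ((Int.sign ((σ b : ℤ) - (σ a : ℤ)) : ℚ) * (Int.sign ((σ d : ℤ) - (σ c : ℤ)) : ℚ))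
      = (n.factorial : ℚ) *
        ((if a = c then 1 else 0) + (if b = d then 1 else 0) - (if b = c then 1 else 0)
          - (if a = d then 1 else 0) + (if a = c ∧ b = d then (1:ℚ) else 0)) := by
  have hab' : a ≠ b := ne_of_lt hab
  have hcd' : c ≠ d := ne_of_lt hcd
  by_cases hac : a = c
  · subst hac
    by_cases hbd : b = d
    · subst hbd
      have h1 : ∀ σ : Equiv.Perm (Fin n),
          ((Int.sign ((σ b : ℤ) - (σ a : ℤ)) : ℚ) * (Int.sign ((σ b : ℤ) - (σ a : ℤ)) : ℚ)) = 1 := by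
        intro σ
        have h0 : ((σ b : ℤ) - (σ a : ℤ)) ≠ 0 := sub_ne_zero.mpr (val_ne hab'.symm)
        rw [show ((Int.sign ((σ b : ℤ) - (σ a : ℤ)) : ℚ) * (Int.sign ((σ b : ℤ) - (σ a : ℤ)) : ℚ))
            = ((Int.sign ((σ b : ℤ) - (σ a : ℤ)) * Int.sign ((σ b : ℤ) - (σ a : ℤ)) : ℤ) : ℚ) by push_cast; ring,
          ← Int.sign_mul, Int.sign_eq_one_iff_pos.mpr (mul_self_pos.mpr h0)]
        norm_num
      rw [Finset.sum_congr rfl fun σ _ => h1 σ]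
      simp [Fintype.card_perm, hab'.symm, hab']
      ring
    · rw [third hab' hcd' hbd]
      simp [hbd, hab'.symm, hcd', hcd]
  · by_cases hbd : b = d
    · subst hbd
      have hcb : c ≠ b := ne_of_lt hcd
      have flip : ∑ σ : Equiv.Perm (Fin n),
          ((Int.sign ((σ b : ℤ) - (σ a : ℤ)) : ℚ) * (Int.sign ((σ b : ℤ) - (σ c : ℤ)) : ℚ))
          = ∑ σ : Equiv.Perm (Fin n),
          ((Int.sign ((σ a : ℤ) - (σ b : ℤ)) : ℚ) * (Int.sign ((σ c : ℤ) - (σ b : ℤ)) : ℚ)) := by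
        refine Finset.sum_congr rfl fun σ _ => ?_
        rw [show (σ b : ℤ) - (σ a : ℤ) = -((σ a : ℤ) - (σ b : ℤ)) by ring,
          show (σ b : ℤ) - (σ c : ℤ) = -((σ c : ℤ) - (σ b : ℤ)) by ring,
          Int.sign_neg, Int.sign_neg]
        push_cast; ring
      rw [flip, third hab'.symm hcb.symm hac]
      simp [hac, hab', hcb.symm, fun h : a = b => hab' h]
    · by_cases hbc : b = c
      · subst hbc
        have had : a ≠ d := ne_of_lt (lt_trans hab hcd)
        have flip : ∑ σ : Equiv.Perm (Fin n),
            ((Int.sign ((σ b : ℤ) - (σ a : ℤ)) : ℚ) * (Int.sign ((σ d : ℤ) - (σ b : ℤ)) : ℚ))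
            = -∑ σ : Equiv.Perm (Fin n),
            ((Int.sign ((σ a : ℤ) - (σ b : ℤ)) : ℚ) * (Int.sign ((σ d : ℤ) - (σ b : ℤ)) : ℚ)) := by
          rw [← Finset.sum_neg_distrib]
          refine Finset.sum_congr rfl fun σ _ => ?_
          rw [show (σ b : ℤ) - (σ a : ℤ) = -((σ a : ℤ) - (σ b : ℤ)) by ring, Int.sign_neg]
          push_cast; ring
        rw [flip]
        have h3 := third hab'.symm hcd' had
        simp only [mul_neg]
        rw [h3]
        simp [hac, hcd', had, hab'.symm]
      · by_cases had : a = d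
        · subst had
          have hca : c ≠ a := ne_of_lt hcd
          have hflip : ∑ σ : Equiv.Perm (Fin n),
              ((Int.sign ((σ b : ℤ) - (σ a : ℤ)) : ℚ) * (Int.sign ((σ a : ℤ) - (σ c : ℤ)) : ℚ))
              = -∑ σ : Equiv.Perm (Fin n),
              ((Int.sign ((σ b : ℤ) - (σ a : ℤ)) : ℚ) * (Int.sign ((σ c : ℤ) - (σ a : ℤ)) : ℚ)) := by
            rw [← Finset.sum_neg_distrib]
            refine Finset.sum_congr rfl fun σ _ => ?_
            rw [show (σ a : ℤ) - (σ c : ℤ) = -((σ c : ℤ) - (σ a : ℤ)) by ring, Int.sign_neg]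
            push_cast; ring
          rw [hflip]
          have h3 := third hab' hca.symm hbc
          simp only [mul_neg]
          rw [h3]
          simp [hac, hbd, hbc, hab'.symm]
        · -- all distinct : sum is zero
          have hzero : ∑ σ : Equiv.Perm (Fin n),
              ((Int.sign ((σ b : ℤ) - (σ a : ℤ)) : ℚ) * (Int.sign ((σ d : ℤ) - (σ c : ℤ)) : ℚ)) = 0 := by
            set f : Equiv.Perm (Fin n) → ℚ := fun σ =>
              ((Int.sign ((σ b : ℤ) - (σ a : ℤ)) : ℚ) * (Int.sign ((σ d : ℤ) - (σ c : ℤ)) : ℚ)) with hf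
            have hswap : ∑ σ, f σ = -∑ σ, f σ := by
              nth_rewrite 1 [← sum_comp_swap f (Equiv.swap a b), ← Finset.sum_neg_distrib]
              refine Finset.sum_congr rfl fun σ _ => ?_
              simp only [hf, Equiv.Perm.mul_apply, Equiv.swap_apply_left, Equiv.swap_apply_right,
                Equiv.swap_apply_of_ne_of_ne (fun h : c = a => hac h.symm) (fun h : c = b => hbc h.symm),
                Equiv.swap_apply_of_ne_of_ne (fun h : d = a => had h.symm) (fun h : d = b => hbd h.symm)]
              rw [show (σ a : ℤ) - (σ b : ℤ) = -((σ b : ℤ) - (σ a : ℤ)) by ring, Int.sign_neg]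
              push_cast; ring
            linarith
          rw [hzero]
          simp [hac, hbd, hbc, had]

lemma fin_filter_lt {n : ℕ} (a : Fin n) : (univ.filter fun d => a < d) = Finset.Ioi a := by
  ext d; simp

lemma fin_filter_gt {n : ℕ} (b : Fin n) : (univ.filter fun c => c < b) = Finset.Iio b := by
  ext c; simp

lemma sum_P_fst {n : ℕ} (a : Fin n) :
    ∑ q ∈ univ.filter (fun q : Fin n × Fin n => q.1 < q.2), (if a = q.1 then (1:ℚ) else 0)
      = ((n - 1 - (a : ℕ) : ℕ) : ℚ) := by
  rw [Finset.sum_filter, Fintype.sum_prod_type]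
  rw [Finset.sum_eq_single a (fun c _ hca => by simp [Ne.symm hca]) (by simp)]
  simp only [if_pos rfl, if_true]
  rw [Finset.sum_boole, fin_filter_lt, Fin.card_Ioi]

lemma sum_P_snd {n : ℕ} (b : Fin n) :
    ∑ q ∈ univ.filter (fun q : Fin n × Fin n => q.1 < q.2), (if b = q.2 then (1:ℚ) else 0)
      = ((b : ℕ) : ℚ) := by
  rw [Finset.sum_filter, Fintype.sum_prod_type, Finset.sum_comm]
  rw [Finset.sum_eq_single b (fun d _ hdb => by simp [Ne.symm hdb]) (by simp)]
  simp only [if_pos rfl, if_true]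
  rw [Finset.sum_boole, fin_filter_gt, Fin.card_Iio]

lemma sum_P_eq {n : ℕ} (p : Fin n × Fin n) (hp : p.1 < p.2) :
    ∑ q ∈ univ.filter (fun q : Fin n × Fin n => q.1 < q.2), (if p = q then (1:ℚ) else 0) = 1 := by
  rw [Finset.sum_ite_eq]
  simp [hp]

lemma sum_P_fst_fun {n : ℕ} (f : Fin n → ℚ) :
    ∑ p ∈ univ.filter (fun q : Fin n × Fin n => q.1 < q.2), f p.1
      = ∑ a : Fin n, ((n - 1 - (a : ℕ) : ℕ) : ℚ) * f a := by
  rw [Finset.sum_filter, Fintype.sum_prod_type]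
  refine Finset.sum_congr rfl fun a _ => ?_
  simp only [show ∀ (x y : Fin n), ((x,y).1) = x from fun _ _ => rfl,
    show ∀ (x y : Fin n), ((x,y).2) = y from fun _ _ => rfl]
  rw [← Finset.sum_filter, Finset.sum_const, fin_filter_lt, Fin.card_Ioi, nsmul_eq_mul]

lemma sum_P_snd_fun {n : ℕ} (f : Fin n → ℚ) :
    ∑ p ∈ univ.filter (fun q : Fin n × Fin n => q.1 < q.2), f p.2
      = ∑ b : Fin n, ((b : ℕ) : ℚ) * f b := by
  rw [Finset.sum_filter, Fintype.sum_prod_type, Finset.sum_comm]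
  refine Finset.sum_congr rfl fun b _ => ?_
  simp only [show ∀ (x y : Fin n), ((x,y).1) = x from fun _ _ => rfl,
    show ∀ (x y : Fin n), ((x,y).2) = y from fun _ _ => rfl]
  rw [← Finset.sum_filter, Finset.sum_const, fin_filter_gt, Fin.card_Iio, nsmul_eq_mul]

lemma gauss1 (n : ℕ) : ∑ i ∈ range n, (i:ℚ) = n * (n-1) / 2 := by
  induction n with
  | zero => simp
  | succ m ih => rw [Finset.sum_range_succ, ih]; push_cast; ring

lemma gauss2 (n : ℕ) : ∑ i ∈ range n, (i:ℚ)^2 = n * (n-1) * (2*n-1) / 6 := by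
  induction n with
  | zero => simp
  | succ m ih => rw [Finset.sum_range_succ, ih]; push_cast; ring

/-- Kendall's `S` statistic of a permutation `σ` (relative to the identity ranking):
`S(σ) = ∑_{i<j} sgn(σ(j) - σ(i))`. -/
def kendallS (n : ℕ) (σ : Equiv.Perm (Fin n)) : ℤ :=
  ∑ q ∈ univ.filter (fun q : Fin n × Fin n => q.1 < q.2),
    Int.sign ((σ q.2 : ℤ) - (σ q.1 : ℤ))

/-- Variance of Kendall's `S` (and `τ`) under the null hypothesis: for a uniformly random
permutation `σ` of `{1,…,n}` (`n ≥ 2`), `Var S = n(n-1)(2n+5)/18`, equivalently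
`Var τ = 2(2n+5)/(9 n (n-1))` for `τ = S / (n(n-1)/2)`. -/
theorem kendall_S_variance {n : ℕ} (hn : 2 ≤ n) :
    ((Nat.factorial n : ℚ))⁻¹ *
          (∑ σ : Equiv.Perm (Fin n), ((kendallS n σ : ℚ)) ^ 2) -
        (((Nat.factorial n : ℚ))⁻¹ * ∑ σ : Equiv.Perm (Fin n), (kendallS n σ : ℚ)) ^ 2 =
      n * (n - 1) * (2 * n + 5) / 18 ∧
    ((Nat.factorial n : ℚ))⁻¹ *
          (∑ σ : Equiv.Perm (Fin n), ((kendallS n σ : ℚ) / (n * (n - 1) / 2)) ^ 2) -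
        (((Nat.factorial n : ℚ))⁻¹ *
            ∑ σ : Equiv.Perm (Fin n), (kendallS n σ : ℚ) / (n * (n - 1) / 2)) ^ 2 =
      2 * (2 * n + 5) / (9 * n * (n - 1)) := by
  have hfac : ((n.factorial : ℚ)) ≠ 0 := Nat.cast_ne_zero.mpr n.factorial_ne_zero
  have hn2 : (2:ℚ) ≤ (n:ℚ) := by exact_mod_cast hn
  have hn0 : (n:ℚ) ≠ 0 := by linarith
  have hn1 : (n:ℚ) - 1 ≠ 0 := by intro h; linarith
  have hP : ∀ σ : Equiv.Perm (Fin n), (kendallS n σ : ℚ)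
      = ∑ p ∈ univ.filter (fun q : Fin n × Fin n => q.1 < q.2),
          (Int.sign ((σ p.2 : ℤ) - (σ p.1 : ℤ)) : ℚ) := by
    intro σ; rw [kendallS]; push_cast; rfl
  -- mean is zero
  have hmean : ∑ σ : Equiv.Perm (Fin n), (kendallS n σ : ℚ) = 0 := by
    rw [Finset.sum_congr rfl fun σ _ => hP σ, Finset.sum_comm]
    refine Finset.sum_eq_zero fun p hp => ?_
    have hab : p.1 < p.2 := (Finset.mem_filter.mp hp).2
    set f : Equiv.Perm (Fin n) → ℚ := fun σ => (Int.sign ((σ p.2 : ℤ) - (σ p.1 : ℤ)) : ℚ) with hf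
    have h1 : ∑ σ, f σ = -∑ σ, f σ := by
      nth_rewrite 1 [← sum_comp_swap f (Equiv.swap p.1 p.2), ← Finset.sum_neg_distrib]
      refine Finset.sum_congr rfl fun σ _ => ?_
      simp only [hf, Equiv.Perm.mul_apply, Equiv.swap_apply_left, Equiv.swap_apply_right]
      rw [show (σ p.1 : ℤ) - (σ p.2 : ℤ) = -((σ p.2 : ℤ) - (σ p.1 : ℤ)) by ring, Int.sign_neg]
      push_cast; ring
    linarith
  -- inner double-count
  have hW : ∑ p ∈ univ.filter (fun q : Fin n × Fin n => q.1 < q.2),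
      ∑ q ∈ univ.filter (fun q : Fin n × Fin n => q.1 < q.2),
        ((if p.1 = q.1 then (1:ℚ) else 0) + (if p.2 = q.2 then 1 else 0)
          - (if p.2 = q.1 then 1 else 0) - (if p.1 = q.2 then 1 else 0)
          + (if p.1 = q.1 ∧ p.2 = q.2 then (1:ℚ) else 0))
      = (n:ℚ) * ((n:ℚ) - 1) * (2*(n:ℚ) + 5) / 6 := by
    have hin : ∀ p ∈ univ.filter (fun q : Fin n × Fin n => q.1 < q.2),
        ∑ q ∈ univ.filter (fun q : Fin n × Fin n => q.1 < q.2),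
          ((if p.1 = q.1 then (1:ℚ) else 0) + (if p.2 = q.2 then 1 else 0)
            - (if p.2 = q.1 then 1 else 0) - (if p.1 = q.2 then 1 else 0)
            + (if p.1 = q.1 ∧ p.2 = q.2 then (1:ℚ) else 0))
        = ((n - 1 - (p.1 : ℕ) : ℕ) : ℚ) + ((p.2 : ℕ) : ℚ) - ((n - 1 - (p.2 : ℕ) : ℕ) : ℚ)
            - ((p.1 : ℕ) : ℚ) + 1 := by
      intro p hp
      have hp' : p.1 < p.2 := (Finset.mem_filter.mp hp).2
      simp only [Finset.sum_add_distrib, Finset.sum_sub_distrib, ← Prod.ext_iff]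
      rw [sum_P_fst p.1, sum_P_snd p.2, sum_P_fst p.2, sum_P_snd p.1, sum_P_eq p hp']
    rw [Finset.sum_congr rfl hin]
    have hconst : ∑ p ∈ univ.filter (fun q : Fin n × Fin n => q.1 < q.2), (1:ℚ)
        = ∑ a : Fin n, ((n - 1 - (a : ℕ) : ℕ) : ℚ) := by
      simpa using sum_P_fst_fun (n := n) (fun _ => (1:ℚ))
    simp only [Finset.sum_add_distrib, Finset.sum_sub_distrib]
    rw [sum_P_fst_fun (fun a => ((n - 1 - (a : ℕ) : ℕ) : ℚ)),
      sum_P_snd_fun (fun b => ((b : ℕ) : ℚ)),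
      sum_P_snd_fun (fun b => ((n - 1 - (b : ℕ) : ℕ) : ℚ)),
      sum_P_fst_fun (fun a => ((a : ℕ) : ℚ)), hconst]
    rw [← Finset.sum_add_distrib, ← Finset.sum_sub_distrib, ← Finset.sum_sub_distrib,
      ← Finset.sum_add_distrib]
    rw [Fin.sum_univ_eq_sum_range (fun i => ((n - 1 - i : ℕ) : ℚ) * ((n - 1 - i : ℕ) : ℚ)
      + (i : ℚ) * (i : ℚ) - (i : ℚ) * ((n - 1 - i : ℕ) : ℚ)
      - ((n - 1 - i : ℕ) : ℚ) * (i : ℚ) + ((n - 1 - i : ℕ) : ℚ))]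
    have hpoly : ∑ i ∈ range n, (((n - 1 - i : ℕ) : ℚ) * ((n - 1 - i : ℕ) : ℚ)
        + (i : ℚ) * (i : ℚ) - (i : ℚ) * ((n - 1 - i : ℕ) : ℚ)
        - ((n - 1 - i : ℕ) : ℚ) * (i : ℚ) + ((n - 1 - i : ℕ) : ℚ))
        = ∑ i ∈ range n, (4*(i:ℚ)^2 - (4*(n:ℚ)-3)*(i:ℚ) + (((n:ℚ)-1)^2 + ((n:ℚ)-1))) := by
      refine Finset.sum_congr rfl fun i hi => ?_
      have hi' : i < n := Finset.mem_range.mp hi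
      have hcast : ((n - 1 - i : ℕ) : ℚ) = (n:ℚ) - 1 - (i:ℚ) := by
        rw [Nat.cast_sub (by omega), Nat.cast_sub (by omega), Nat.cast_one]
      rw [hcast]; ring
    rw [hpoly, Finset.sum_add_distrib, Finset.sum_sub_distrib, ← Finset.mul_sum,
      ← Finset.mul_sum, gauss1, gauss2, Finset.sum_const, Finset.card_range, nsmul_eq_mul]
    ring
  -- second moment
  have hsq : (3:ℚ) * ∑ σ : Equiv.Perm (Fin n), (kendallS n σ : ℚ)^2
      = (n.factorial : ℚ) * ((n:ℚ) * ((n:ℚ) - 1) * (2*(n:ℚ) + 5) / 6) := by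
    have e1 : ∑ σ : Equiv.Perm (Fin n), (kendallS n σ : ℚ)^2
        = ∑ p ∈ univ.filter (fun q : Fin n × Fin n => q.1 < q.2),
            ∑ q ∈ univ.filter (fun q : Fin n × Fin n => q.1 < q.2),
              ∑ σ : Equiv.Perm (Fin n),
                ((Int.sign ((σ p.2 : ℤ) - (σ p.1 : ℤ)) : ℚ)
                  * (Int.sign ((σ q.2 : ℤ) - (σ q.1 : ℤ)) : ℚ)) := by
      rw [Finset.sum_congr rfl (fun σ _ => by rw [hP σ, pow_two, Finset.sum_mul_sum]),
        Finset.sum_comm]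
      exact Finset.sum_congr rfl fun p _ => Finset.sum_comm
    calc (3:ℚ) * ∑ σ : Equiv.Perm (Fin n), (kendallS n σ : ℚ)^2
        = ∑ p ∈ univ.filter (fun q : Fin n × Fin n => q.1 < q.2),
            ∑ q ∈ univ.filter (fun q : Fin n × Fin n => q.1 < q.2),
              (3:ℚ) * ∑ σ : Equiv.Perm (Fin n),
                ((Int.sign ((σ p.2 : ℤ) - (σ p.1 : ℤ)) : ℚ)
                  * (Int.sign ((σ q.2 : ℤ) - (σ q.1 : ℤ)) : ℚ)) := by
          rw [e1, Finset.mul_sum]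
          exact Finset.sum_congr rfl fun p _ => Finset.mul_sum _ _ _
      _ = ∑ p ∈ univ.filter (fun q : Fin n × Fin n => q.1 < q.2),
            ∑ q ∈ univ.filter (fun q : Fin n × Fin n => q.1 < q.2),
              (n.factorial : ℚ) *
                ((if p.1 = q.1 then (1:ℚ) else 0) + (if p.2 = q.2 then 1 else 0)
                  - (if p.2 = q.1 then 1 else 0) - (if p.1 = q.2 then 1 else 0)
                  + (if p.1 = q.1 ∧ p.2 = q.2 then (1:ℚ) else 0)) := by
          refine Finset.sum_congr rfl fun p hp => Finset.sum_congr rfl fun q hq => ?_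
          exact pair_sum (Finset.mem_filter.mp hp).2 (Finset.mem_filter.mp hq).2
      _ = (n.factorial : ℚ) *
            ∑ p ∈ univ.filter (fun q : Fin n × Fin n => q.1 < q.2),
              ∑ q ∈ univ.filter (fun q : Fin n × Fin n => q.1 < q.2),
                ((if p.1 = q.1 then (1:ℚ) else 0) + (if p.2 = q.2 then 1 else 0)
                  - (if p.2 = q.1 then 1 else 0) - (if p.1 = q.2 then 1 else 0)
                  + (if p.1 = q.1 ∧ p.2 = q.2 then (1:ℚ) else 0)) := by
          rw [Finset.mul_sum]
          exact Finset.sum_congr rfl fun p _ => (Finset.mul_sum _ _ _).symm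
      _ = (n.factorial : ℚ) * ((n:ℚ) * ((n:ℚ) - 1) * (2*(n:ℚ) + 5) / 6) := by rw [hW]
  have hSsq : ∑ σ : Equiv.Perm (Fin n), (kendallS n σ : ℚ)^2
      = (n.factorial : ℚ) * ((n:ℚ) * ((n:ℚ) - 1) * (2*(n:ℚ) + 5) / 18) := by
    linarith
  constructor
  · rw [hSsq, hmean]
    field_simp
    ring
  · have hKs : ∑ σ : Equiv.Perm (Fin n), ((kendallS n σ : ℚ) / ((n:ℚ) * ((n:ℚ) - 1) / 2)) ^ 2
        = (∑ σ : Equiv.Perm (Fin n), (kendallS n σ : ℚ)^2)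
            / ((n:ℚ) * ((n:ℚ) - 1) / 2)^2 := by
      rw [Finset.sum_congr rfl (fun σ _ => div_pow (kendallS n σ : ℚ) ((n:ℚ) * ((n:ℚ) - 1) / 2) 2)]
      exact (Finset.sum_div _ _ _).symm
    have hKm : ∑ σ : Equiv.Perm (Fin n), ((kendallS n σ : ℚ) / ((n:ℚ) * ((n:ℚ) - 1) / 2))
        = (∑ σ : Equiv.Perm (Fin n), (kendallS n σ : ℚ)) / ((n:ℚ) * ((n:ℚ) - 1) / 2) :=
      (Finset.sum_div _ _ _).symm
    rw [hKs, hKm, hSsq, hmean]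
    rw [zero_div, mul_zero]
    field_simp
    ring
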